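/- Let α, β, δ > 0. For a state Q = (p, u, c, v) ∈ ℝ⁴, let Df(Q) be the 4×4 real matrix with rows (0, 1/α, 0, 0), (1, (3/2)u, G′(c), 0), (0, c, u, 1), (0, 0, (1/δ)(W″(c) + 1/β), 0), where G′(c) = c·W″(c) + c/β, and define η(p,u,c,v) = (α/2)p² + (1/2)u² + W(c) + (1/(2β))c² + (δ/2)v² and q(p,u,c,v) = p u + (1/2) u³ + c (W′(c) + c/β) u + (W′(c) + c/β) v. Then for every Q ∈ ℝ⁴ the entropy compatibility relation holds: the row vector (∇η(Q))ᵀ Df(Q) equals (∇q(Q))ᵀ; explicitly, with ∇η(Q) = (α p, u, W′(c) + c/β, δ v), one has Σ_{i=1}^{4} (∇η(Q))_i (Df(Q))_{ij} = (∇q(Q))_j for each j = 1,…,4. -/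

import Mathlib

open scoped BigOperators

/-- Entropy compatibility relation `(∇η)ᵀ Df = (∇q)ᵀ` for the one-dimensional
hyperbolic sub-system of the relaxed friction-type approximation, with
`W(c) = (1/4)(c² − 1)²`, `W′(c) = c³ − c`, `W″(c) = 3c² − 1`,
entropy `η(p,u,c,v) = (α/2)p² + (1/2)u² + W(c) + (1/(2β))c² + (δ/2)v²` and
entropy flux `q(p,u,c,v) = pu + (1/2)u³ + c(W′(c) + c/β)u + (W′(c) + c/β)v`. -/
theorem entropy_flux_compatibility
    (α β δ : ℝ) (hα : 0 < α) (hβ : 0 < β) (hδ : 0 < δ)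
    (η q : (Fin 4 → ℝ) → ℝ)
    (hη : η = fun Q => (α / 2) * (Q 0) ^ 2 + (1 / 2) * (Q 1) ^ 2
        + (1 / 4) * ((Q 2) ^ 2 - 1) ^ 2 + (1 / (2 * β)) * (Q 2) ^ 2
        + (δ / 2) * (Q 3) ^ 2)
    (hq : q = fun Q => Q 0 * Q 1 + (1 / 2) * (Q 1) ^ 3
        + Q 2 * (((Q 2) ^ 3 - Q 2) + Q 2 / β) * Q 1
        + (((Q 2) ^ 3 - Q 2) + Q 2 / β) * Q 3)
    (Df : (Fin 4 → ℝ) → Matrix (Fin 4) (Fin 4) ℝ)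
    (hDf : ∀ Q, Df Q =
      !![0, 1 / α, 0, 0;
         1, (3 / 2) * Q 1, Q 2 * (3 * (Q 2) ^ 2 - 1) + Q 2 / β, 0;
         0, Q 2, Q 1, 1;
         0, 0, (1 / δ) * ((3 * (Q 2) ^ 2 - 1) + 1 / β), 0]) :
    ∀ Q : Fin 4 → ℝ, ∀ j : Fin 4,
      ∑ i : Fin 4, fderiv ℝ η Q (Pi.single i 1) * Df Q i j
        = fderiv ℝ q Q (Pi.single j 1) := by
  subst hη hq
  intro Q j
  have hp : ∀ k : Fin 4, HasFDerivAt (fun Q : Fin 4 → ℝ => Q k)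
      (ContinuousLinearMap.proj k : (Fin 4 → ℝ) →L[ℝ] ℝ) Q :=
    fun k => (ContinuousLinearMap.proj k : (Fin 4 → ℝ) →L[ℝ] ℝ).hasFDerivAt
  have e1 : (fun Q : Fin 4 → ℝ => α / 2 * Q 0 ^ 2 + 1 / 2 * Q 1 ^ 2
        + 1 / 4 * (Q 2 ^ 2 - 1) ^ 2 + 1 / (2 * β) * Q 2 ^ 2 + δ / 2 * Q 3 ^ 2)
      = (fun Q : Fin 4 → ℝ => α / 2 * (Q 0 * Q 0) + 1 / 2 * (Q 1 * Q 1)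
        + 1 / 4 * ((Q 2 * Q 2 - 1) * (Q 2 * Q 2 - 1)) + 1 / (2 * β) * (Q 2 * Q 2)
        + δ / 2 * (Q 3 * Q 3)) := by funext Q; ring
  have e2 : (fun Q : Fin 4 → ℝ => Q 0 * Q 1 + 1 / 2 * Q 1 ^ 3
        + Q 2 * (Q 2 ^ 3 - Q 2 + Q 2 / β) * Q 1 + (Q 2 ^ 3 - Q 2 + Q 2 / β) * Q 3)
      = (fun Q : Fin 4 → ℝ => Q 0 * Q 1 + 1 / 2 * (Q 1 * Q 1 * Q 1)
        + Q 2 * (Q 2 * Q 2 * Q 2 - Q 2 + (1/β) * Q 2) * Q 1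
        + (Q 2 * Q 2 * Q 2 - Q 2 + (1/β) * Q 2) * Q 3) := by funext Q; ring
  rw [e1, e2]
  have Hη := ((((((hp 0).mul (hp 0)).const_mul (α/2)).add
      (((hp 1).mul (hp 1)).const_mul (1/2))).add
      (((((hp 2).mul (hp 2)).sub_const 1).mul (((hp 2).mul (hp 2)).sub_const 1)).const_mul (1/4))).add
      (((hp 2).mul (hp 2)).const_mul (1/(2*β)))).add
      (((hp 3).mul (hp 3)).const_mul (δ/2))
  have Hq := ((((hp 0).mul (hp 1)).add (((hp 1).mul (hp 1)).mul (hp 1) |>.const_mul (1/2))).add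
      (((hp 2).mul (((((hp 2).mul (hp 2)).mul (hp 2)).sub (hp 2)).add ((hp 2).const_mul (1/β)))).mul (hp 1))).add
      ((((((hp 2).mul (hp 2)).mul (hp 2)).sub (hp 2)).add ((hp 2).const_mul (1/β))).mul (hp 3))
  erw [Hη.fderiv, Hq.fderiv]
  simp only [ContinuousLinearMap.add_apply, ContinuousLinearMap.smul_apply,
    ContinuousLinearMap.coe_smul', Pi.smul_apply, ContinuousLinearMap.proj_apply,
    ContinuousLinearMap.sub_apply, smul_eq_mul, hDf, Fin.sum_univ_four]
  fin_cases j <;>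
    simp [Pi.single_apply, Matrix.cons_val_zero, Matrix.cons_val_one, Matrix.head_cons, Matrix.vecHead, Matrix.vecTail] <;>
    field_simp <;> ring
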